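/- Let k and n be positive integers and m = kn+1. The map D ↦ T(D) given by the filling algorithm is a bijection from D_{m,n} onto T_n^k. -/

import Mathlib

open scoped Classical

/-- Number of North steps (letters `true`) among the first `i` letters of `w`. -/
def upCount (w : List Bool) (i : ℕ) : ℕ := (w.take i).count true

/-- Number of East steps (letters `false`) among the first `i` letters of `w`. -/
def rightCount (w : List Bool) (i : ℕ) : ℕ := (w.take i).count false

/-- `w` is an `(m,n)`-Dyck path: a word with `n` North letters (`true`) and `m` East
letters (`false`), each of whose prefixes with `b` North and `a` East letters
satisfies `b*m - a*n ≥ 0`. -/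
def IsDyck (m n : ℕ) (w : List Bool) : Prop :=
  w.length = m + n ∧ w.count true = n ∧
  ∀ i, n * rightCount w i ≤ m * upCount w i

/-- The rank of the `(i+1)`-st step (0-indexed `i`) of `w`, namely `b*m - a*n` where
`b` and `a` are the numbers of North and East letters among the first `i` letters. -/
def rank (m n : ℕ) (w : List Bool) (i : ℕ) : ℤ :=
  (m : ℤ) * upCount w i - (n : ℤ) * rightCount w i

/-- The sweep map: list the steps of `w` in increasing order of their ranks. -/
def sweep (m n : ℕ) (w : List Bool) : List Bool :=
  (((List.range w.length).mergeSort
      (fun i j => decide (rank m n w i ≤ rank m n w j))).map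
    (fun i => w.getD i false))

/-- The word `EN(w)`: list the steps of `w` in increasing order of their end ranks
(the end rank of the `(i+1)`-st step is `rank w (i+1)`). -/
def sweepEN (m n : ℕ) (w : List Bool) : List Bool :=
  (((List.range w.length).mergeSort
      (fun i j => decide (rank m n w (i + 1) ≤ rank m n w (j + 1)))).map
    (fun i => w.getD i false))

/-- One step of the filling algorithm: place entry `p.1` according to letter `p.2`
(`true` = S : start a new column; `false` = W : put it below the smallest active
entry, an active entry being the current bottom entry of a column of height `< k+1`). -/
def fillStep (k : ℕ) (cols : List (List ℕ)) (p : ℕ × Bool) : List (List ℕ) :=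
  if p.2 then cols ++ [[p.1]]
  else
    match ((List.range cols.length).filter
        (fun j => (cols.getD j []).length < k + 1)).argmin
        (fun j => (cols.getD j []).getLastD 0) with
    | none => cols
    | some j => cols.set j ((cols.getD j []) ++ [p.1])

/-- The state (list of columns, each recorded top to bottom) of the filling algorithm
after the entries `1, …, t` have been placed according to the first `t` letters of `w`. -/
def fillColsUpTo (k : ℕ) (w : List Bool) (t : ℕ) : List (List ℕ) :=
  ((List.range t).map (fun i => (i + 1, w.getD i false))).foldl (fillStep k) []

/-- The final state of the filling algorithm on the word `w` (entries
`1, …, m+n-1` placed, i.e. all letters but the last one processed). -/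
def fillCols (k : ℕ) (w : List Bool) : List (List ℕ) :=
  fillColsUpTo k w (w.length - 1)

/-- The tableau `T(D)` produced by the filling algorithm, as a function
(row, column) ↦ entry, rows and columns 0-indexed. -/
def fillTableau (k n : ℕ) (w : List Bool) : Fin (k + 1) → Fin n → ℕ :=
  fun i j => ((fillCols k w).getD j []).getD i 0

/-- `T` fills the `(k+1) × n` array with `1, …, (k+1)n`, increasing along rows and
columns. -/
def IsFilling (k n : ℕ) (T : Fin (k + 1) → Fin n → ℕ) : Prop :=
  (∀ i j, T i j ∈ Finset.Icc 1 ((k + 1) * n)) ∧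
  Function.Injective (fun p : Fin (k + 1) × Fin n => T p.1 p.2) ∧
  (∀ i, StrictMono (T i)) ∧
  (∀ j, StrictMono (fun i => T i j))

/-- For all entries `a < b < c < d` of `T` with `d` directly below `a`, the entries
`b` and `c` do not lie in the same column. -/
def NoBadQuadruple (k n : ℕ) (T : Fin (k + 1) → Fin n → ℕ) : Prop :=
  ∀ (i : Fin (k + 1)) (hi : (i : ℕ) + 1 < k + 1) (j : Fin n)
    (r r' : Fin (k + 1)) (c : Fin n), r < r' →
      ¬ (T i j < T r c ∧ T r c < T r' c ∧ T r' c < T ⟨(i : ℕ) + 1, hi⟩ j)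

/-- The family `𝒯ₙᵏ` of tableaux. -/
def IsFussTableau (k n : ℕ) (T : Fin (k + 1) → Fin n → ℕ) : Prop :=
  IsFilling k n T ∧ NoBadQuadruple k n T

/-- A value `r` is marked for `T` when `r - 1` is a bottom-row entry of `T`. -/
def Marked (k n : ℕ) (T : Fin (k + 1) → Fin n → ℕ) (r : ℕ) : Prop :=
  ∃ j : Fin n, T (Fin.last k) j + 1 = r

/-- One move of the walk `w(T)` on the values `1, …, M` (where `M = m + n`):
from a row-1 entry `x` move to `r + 1` where `r` is the bottom entry of the column
of `x`; from an entry `x` of one of the rows `2, …, k+1` move to the largest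
unmarked value `≤ r`, where `r` is the entry directly above `x`; from `x = M`
move to the largest unmarked value `< M`. -/
noncomputable def walkStep (k n M : ℕ) (T : Fin (k + 1) → Fin n → ℕ) (x : ℕ) : ℕ :=
  if h : ∃ j : Fin n, T 0 j = x then
    T (Fin.last k) (Classical.choose h) + 1
  else if h2 : ∃ p : Fin (k + 1) × Fin n, T p.1 p.2 = x then
    let p := Classical.choose h2
    ((((Finset.Icc 1 M).filter
        (fun y => y ≤ T (⟨(p.1 : ℕ) - 1, lt_of_le_of_lt (Nat.sub_le _ _) p.1.2⟩ : Fin (k + 1)) p.2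
          ∧ ¬ Marked k n T y))).max).getD 0
  else
    ((((Finset.Icc 1 M).filter (fun y => y < M ∧ ¬ Marked k n T y))).max).getD 0

/-- The area of the path `w`: the number of lattice cells of the `m × n` rectangle
lying below the path whose interiors lie entirely above the diagonal.
The cell in column `x` and row `y` (0-indexed) has its interior above the diagonal
iff `n*(x+1) ≤ m*y`, and lies below the path iff the `(y+1)`-st North step of `w`
occurs before the `(x+1)`-st East step. -/
def nthLetterIdx (w : List Bool) (b : Bool) (j : ℕ) : ℕ :=
  (((List.range w.length).filter (fun i => w.getD i false = b))).getD j 0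

def area (m n : ℕ) (w : List Bool) : ℕ :=
  ((Finset.range m ×ˢ Finset.range n).filter
    (fun p => n * (p.1 + 1) ≤ m * p.2 ∧
      nthLetterIdx w true p.2 < nthLetterIdx w false p.1)).card

/-- The reduction `red(T)`: delete column 1 and replace each remaining entry `i` by
`i` minus the number of column-1 entries smaller than `i`. -/
def red (k n : ℕ) (T : Fin (k + 1) → Fin n → ℕ) : Fin (k + 1) → Fin (n - 1) → ℕ :=
  fun i j =>
    let v := T i ⟨(j : ℕ) + 1, by have := j.2; omega⟩
    v - (Finset.univ.filter
      (fun u : Fin (k + 1) => T u ⟨0, by have := j.2; omega⟩ < v)).card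

/-- The (finite) set of `(m,n)`-Dyck paths as a `Finset` of words. -/
noncomputable def dyckFinset (m n : ℕ) : Finset (List Bool) :=
  ((Finset.univ : Finset (Fin (m + n) → Bool)).image List.ofFn).filter
    (fun w => IsDyck m n w)



namespace S9

def colAt (cols : List (List ℕ)) (j : ℕ) : List ℕ := cols.getD j []

lemma colAt_append_lt (cols : List (List ℕ)) (l : List ℕ) {j : ℕ} (h : j < cols.length) :
    colAt (cols ++ [l]) j = colAt cols j := by
  simp only [colAt, List.getD_eq_getElem?_getD, List.getElem?_append_left h]

lemma colAt_append_len (cols : List (List ℕ)) (l : List ℕ) :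
    colAt (cols ++ [l]) cols.length = l := by
  simp only [colAt, List.getD_eq_getElem?_getD, List.getElem?_concat_length, Option.getD_some]

lemma colAt_set_self {cols : List (List ℕ)} {j : ℕ} (l : List ℕ) (h : j < cols.length) :
    colAt (cols.set j l) j = l := by
  simp only [colAt, List.getD_eq_getElem?_getD, List.getElem?_set_self h, Option.getD_some]

lemma colAt_set_ne {cols : List (List ℕ)} {j j' : ℕ} (l : List ℕ) (h : j ≠ j') :
    colAt (cols.set j l) j' = colAt cols j' := by
  simp only [colAt, List.getD_eq_getElem?_getD, List.getElem?_set_ne h]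

lemma getD_mem {l : List ℕ} {i : ℕ} (h : i < l.length) : l.getD i 0 ∈ l := by
  rw [List.getD_eq_getElem l 0 h]; exact List.getElem_mem h

lemma getLastD_mem {l : List ℕ} (h : l ≠ []) : l.getLastD 0 ∈ l := by
  rw [List.getLastD_eq_getLast?, List.getLast?_eq_getElem?,
    List.getElem?_eq_getElem (by have := List.length_pos_iff.mpr h; omega)]
  exact List.getElem_mem _

lemma getLastD_eq_getD {l : List ℕ} (h : l ≠ []) : l.getLastD 0 = l.getD (l.length - 1) 0 := by
  rw [List.getLastD_eq_getLast?, List.getLast?_eq_getElem?, List.getD_eq_getElem?_getD]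

lemma chain'_getD_lt {l : List ℕ} (hc : List.Chain' (· < ·) l) {i i' : ℕ} (hii : i < i')
    (h : i' < l.length) : l.getD i 0 < l.getD i' 0 := by
  rw [List.getD_eq_getElem l 0 (lt_trans hii h), List.getD_eq_getElem l 0 h]
  exact List.pairwise_iff_getElem.1 (List.isChain_iff_pairwise.1 hc) i i' _ h hii

lemma chain'_getD_le_getLastD {l : List ℕ} (hc : List.Chain' (· < ·) l) {i : ℕ}
    (h : i < l.length) : l.getD i 0 ≤ l.getLastD 0 := by
  have hne : l ≠ [] := List.ne_nil_of_length_pos (by omega)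
  rw [getLastD_eq_getD hne]
  rcases Nat.lt_or_ge i (l.length - 1) with h' | h'
  · exact le_of_lt (chain'_getD_lt hc h' (by omega))
  · have : i = l.length - 1 := by omega
    simp [this]

lemma mem_getD {l : List ℕ} {x : ℕ} (h : x ∈ l) : ∃ i < l.length, l.getD i 0 = x := by
  obtain ⟨i, hi, he⟩ := List.getElem_of_mem h
  exact ⟨i, hi, by rw [List.getD_eq_getElem l 0 hi]; exact he⟩

lemma chain'_concat {l : List ℕ} {x : ℕ} (hc : List.Chain' (· < ·) l)
    (hx : ∀ y ∈ l, y < x) : List.Chain' (· < ·) (l ++ [x]) := by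
  refine List.isChain_append.2 ?_
  refine ⟨hc, List.isChain_singleton x, ?_⟩
  intro a ha b hb
  simp only [List.head?_cons, Option.mem_def, Option.some.injEq] at hb
  subst hb
  exact hx a (List.mem_of_mem_getLast? ha)

lemma sum_map_set (f : List ℕ → ℕ) : ∀ (cols : List (List ℕ)) (j : ℕ) (l : List ℕ),
    j < cols.length →
    ((cols.set j l).map f).sum + f (colAt cols j) = (cols.map f).sum + f l
  | [], j, l, h => by simp at h
  | c :: cs, 0, l, h => by simp [colAt]; omega
  | c :: cs, (j+1), l, h => by
      simp only [List.set_cons_succ, List.map_cons, List.sum_cons]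
      have := sum_map_set f cs j l (by simpa using h)
      simp only [colAt] at this ⊢
      simp only [List.getD_cons_succ]
      omega


lemma getD_concat_lt {l : List ℕ} (x : ℕ) {i : ℕ} (h : i < l.length) :
    (l ++ [x]).getD i 0 = l.getD i 0 := by
  simp only [List.getD_eq_getElem?_getD, List.getElem?_append_left h]

lemma getD_concat_len (l : List ℕ) (x : ℕ) : (l ++ [x]).getD l.length 0 = x := by
  simp only [List.getD_eq_getElem?_getD, List.getElem?_concat_length, Option.getD_some]

lemma getLastD_concat (l : List ℕ) (x : ℕ) : (l ++ [x]).getLastD 0 = x := by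
  rw [List.getLastD_eq_getLast?, List.getLast?_concat]; rfl

lemma mem_le_getLastD {l : List ℕ} (hc : List.Chain' (· < ·) l) {x : ℕ} (h : x ∈ l) :
    x ≤ l.getLastD 0 := by
  obtain ⟨i, hi, he⟩ := mem_getD h
  exact he ▸ chain'_getD_le_getLastD hc hi

/-- The full invariant maintained by the filling algorithm. -/
structure Inv (k : ℕ) (w : List Bool) (t : ℕ) (cols : List (List ℕ)) : Prop where
  blen : cols.length = (w.take t).count true
  nen : ∀ j < cols.length, colAt cols j ≠ []
  hle : ∀ j < cols.length, (colAt cols j).length ≤ k + 1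
  inc : ∀ j < cols.length, List.Chain' (· < ·) (colAt cols j)
  mem : ∀ j < cols.length, ∀ x ∈ colAt cols j, 1 ≤ x ∧ x ≤ t
  cover : ∀ x, 1 ≤ x → x ≤ t → ∃ j < cols.length, x ∈ colAt cols j
  uniq : ∀ j < cols.length, ∀ j' < cols.length, ∀ x, x ∈ colAt cols j → x ∈ colAt cols j' → j = j'
  sumlen : (cols.map List.length).sum = t
  hmono : ∀ j j', j ≤ j' → j' < cols.length → (colAt cols j').length ≤ (colAt cols j).length
  rows : ∀ j j', j < j' → j' < cols.length → ∀ i, i < (colAt cols j').length →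
      (colAt cols j).getD i 0 < (colAt cols j').getD i 0
  heads : ∀ x, (∃ j < cols.length, (colAt cols j).getD 0 0 = x) ↔
      (1 ≤ x ∧ x ≤ t ∧ w.getD (x - 1) false = true)
  hq : ∀ j < cols.length, (colAt cols j).length < k + 1 →
      ∀ c < cols.length, c ≠ j → ∀ x ∈ colAt cols c, ∀ y ∈ colAt cols c,
        (colAt cols j).getLastD 0 < x → (colAt cols j).getLastD 0 < y → x = y
  hr : ∀ j < cols.length, ∀ i, i + 1 < (colAt cols j).length →
      ∀ c < cols.length, ∀ x ∈ colAt cols c, ∀ y ∈ colAt cols c, x < y →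
        ¬((colAt cols j).getD i 0 < x ∧ y < (colAt cols j).getD (i + 1) 0)

lemma inv_zero (k : ℕ) (w : List Bool) : Inv k w 0 [] := by
  refine ⟨?_, ?_, ?_, ?_, ?_, ?_, ?_, ?_, ?_, ?_, ?_, ?_, ?_⟩ <;>
    simp [colAt] <;> omega

lemma invS {k t : ℕ} {w : List Bool} {cols : List (List ℕ)} (hI : Inv k w t cols)
    (hl : w.getD t false = true) : Inv k w (t + 1) (cols ++ [[t + 1]]) := by
  have htlen : t < w.length := by
    by_contra h
    rw [List.getD_eq_default _ _ (by omega)] at hl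
    exact Bool.false_ne_true hl
  have hlen : (cols ++ [[t + 1]]).length = cols.length + 1 := by simp
  have hcount : (w.take (t + 1)).count true = (w.take t).count true + 1 := by
    rw [List.take_succ, List.getElem?_eq_getElem htlen]
    have : w[t] = true := by rwa [List.getD_eq_getElem _ _ htlen] at hl
    simp [this]
  -- case analysis helper
  have hcase : ∀ j, j < cols.length + 1 → j < cols.length ∨ j = cols.length := by omega
  have hAlt : ∀ j < cols.length, colAt (cols ++ [[t + 1]]) j = colAt cols j :=
    fun j hj => colAt_append_lt cols _ hj
  have hAeq : colAt (cols ++ [[t + 1]]) cols.length = [t + 1] := colAt_append_len cols _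
  have hmem' : ∀ j < cols.length, ∀ x ∈ colAt cols j, 1 ≤ x ∧ x ≤ t := hI.mem
  constructor
  case blen => rw [hlen, hcount, hI.blen]
  case nen =>
    intro j hj
    rcases hcase j (by rwa [hlen] at hj) with h | h
    · rw [hAlt j h]; exact hI.nen j h
    · rw [h, hAeq]; simp
  case hle =>
    intro j hj
    rcases hcase j (by rwa [hlen] at hj) with h | h
    · rw [hAlt j h]; exact hI.hle j h
    · rw [h, hAeq]; simp
  case inc =>
    intro j hj
    rcases hcase j (by rwa [hlen] at hj) with h | h
    · rw [hAlt j h]; exact hI.inc j h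
    · rw [h, hAeq]; exact List.isChain_singleton _
  case mem =>
    intro j hj x hx
    rcases hcase j (by rwa [hlen] at hj) with h | h
    · rw [hAlt j h] at hx
      have := hI.mem j h x hx; omega
    · rw [h, hAeq] at hx
      simp at hx; omega
  case cover =>
    intro x hx1 hx2
    rcases Nat.lt_or_ge x (t + 1) with h | h
    · obtain ⟨j, hj, hm⟩ := hI.cover x hx1 (by omega)
      exact ⟨j, by omega, by rw [hAlt j hj]; exact hm⟩
    · have : x = t + 1 := by omega
      exact ⟨cols.length, by omega, by rw [hAeq, this]; simp⟩
  case uniq =>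
    intro j hj j' hj' x hx hx'
    rw [hlen] at hj hj'
    rcases hcase j hj with h | h <;> rcases hcase j' hj' with h' | h'
    · rw [hAlt j h] at hx; rw [hAlt j' h'] at hx'
      exact hI.uniq j h j' h' x hx hx'
    · rw [hAlt j h] at hx; rw [h', hAeq] at hx'
      simp at hx'
      have := hI.mem j h x hx; omega
    · rw [h, hAeq] at hx; rw [hAlt j' h'] at hx'
      simp at hx
      have := hI.mem j' h' x hx'; omega
    · omega
  case sumlen => simp [hI.sumlen]
  case hmono =>
    intro j j' hjj hj'
    rw [hlen] at hj'
    rcases hcase j' hj' with h' | h'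
    · rw [hAlt j' h', hAlt j (by omega)]
      exact hI.hmono j j' hjj h'
    · rw [h', hAeq]
      rcases hcase j (by omega) with h | h
      · rw [hAlt j h]
        have := hI.nen j h
        have := List.length_pos_iff.mpr this
        simpa using Nat.succ_le_of_lt this
      · rw [h, hAeq]
  case rows =>
    intro j j' hjj hj' i hi
    rw [hlen] at hj'
    rcases hcase j' hj' with h' | h'
    · rw [hAlt j' h'] at hi ⊢
      rw [hAlt j (by omega)]
      exact hI.rows j j' hjj h' i hi
    · rw [h', hAeq] at hi ⊢
      simp at hi
      subst hi
      have hj : j < cols.length := by omega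
      rw [hAlt j hj]
      have h0 : 0 < (colAt cols j).length := List.length_pos_iff.mpr (hI.nen j hj)
      have := hI.mem j hj _ (getD_mem h0)
      show (colAt cols j).getD 0 0 < ([t + 1] : List ℕ).getD 0 0
      simp only [List.getD_cons_zero]
      omega
  case heads =>
    intro x
    constructor
    · rintro ⟨j, hj, he⟩
      rw [hlen] at hj
      rcases hcase j hj with h | h
      · rw [hAlt j h] at he
        have := (hI.heads x).mp ⟨j, h, he⟩
        exact ⟨this.1, by omega, this.2.2⟩
      · rw [h, hAeq] at he
        simp at he
        refine ⟨by omega, by omega, ?_⟩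
        rw [← he]; simpa using hl
    · rintro ⟨hx1, hx2, hx3⟩
      rcases Nat.lt_or_ge x (t + 1) with h | h
      · obtain ⟨j, hj, he⟩ := (hI.heads x).mpr ⟨hx1, by omega, hx3⟩
        exact ⟨j, by omega, by rw [hAlt j hj]; exact he⟩
      · have : x = t + 1 := by omega
        exact ⟨cols.length, by omega, by rw [hAeq, this]; rfl⟩
  case hq =>
    intro j hj hjfull c hc hcj x hx y hy hbx hby
    rw [hlen] at hj hc
    rcases hcase c hc with h | h
    · rw [hAlt c h] at hx hy
      rcases hcase j hj with h' | h'
      · rw [hAlt j h'] at hjfull hbx hby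
        exact hI.hq j h' hjfull c h (by omega) x hx y hy hbx hby
      · rw [h', hAeq] at hbx
        simp at hbx
        have := hI.mem c h x hx; omega
    · rw [h, hAeq] at hx hy
      simp at hx hy; omega
  case hr =>
    intro j hj i hi c hc x hx y hy hxy
    rw [hlen] at hj hc
    rcases hcase j hj with h | h
    · rw [hAlt j h] at hi ⊢
      rcases hcase c hc with h' | h'
      · rw [hAlt c h'] at hx hy
        exact hI.hr j h i hi c h' x hx y hy hxy
      · rw [h', hAeq] at hx hy
        simp at hx hy; omega
    · rw [h, hAeq] at hi
      simp at hi

lemma sum_map_length_ge (c : ℕ) : ∀ (cols : List (List ℕ)),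
    (∀ j < cols.length, c ≤ (colAt cols j).length) →
    c * cols.length ≤ (cols.map List.length).sum
  | [], _ => by simp
  | l :: ls, h => by
      simp only [List.map_cons, List.sum_cons, List.length_cons]
      have h0 := h 0 (by simp)
      simp only [colAt, List.getD_cons_zero] at h0
      have hrec := sum_map_length_ge c ls (fun j hj => by
        have := h (j + 1) (by simp; omega)
        simpa only [colAt, List.getD_cons_succ] using this)
      rw [Nat.mul_succ]
      omega

lemma invW {k t : ℕ} {w : List Bool} {cols : List (List ℕ)} (hI : Inv k w t cols)
    (hl : w.getD t false = false) (hroom : t < (k + 1) * cols.length) :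
    Inv k w (t + 1) (fillStep k cols (t + 1, false)) := by
  classical
  have hex : ∃ j0, j0 < cols.length ∧ (colAt cols j0).length < k + 1 := by
    by_contra h
    push_neg at h
    have := sum_map_length_ge (k + 1) cols (fun j hj => h j hj)
    rw [hI.sumlen] at this
    omega
  obtain ⟨j0, hj0, hj0f⟩ := hex
  set L := ((List.range cols.length).filter
      (fun j => (cols.getD j []).length < k + 1)) with hLdef
  have hmemL : ∀ j, j ∈ L ↔ j < cols.length ∧ (colAt cols j).length < k + 1 := by
    intro j
    simp [hLdef, List.mem_filter, List.mem_range, colAt]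
  have hLne : L ≠ [] := fun h => by
    have := (hmemL j0).2 ⟨hj0, hj0f⟩
    rw [h] at this
    exact List.not_mem_nil this
  obtain ⟨js, hargmin⟩ : ∃ js, L.argmin (fun j => (cols.getD j []).getLastD 0) = some js := by
    rcases h : L.argmin (fun j => (cols.getD j []).getLastD 0) with _ | js
    · exact absurd (List.argmin_eq_none.mp h) hLne
    · exact ⟨js, rfl⟩
  have hjs := (hmemL js).1 (List.argmin_mem hargmin)
  have hmin : ∀ c, c < cols.length → (colAt cols c).length < k + 1 →
      (colAt cols js).getLastD 0 ≤ (colAt cols c).getLastD 0 := by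
    intro c h1 h2
    exact List.le_of_mem_argmin ((hmemL c).2 ⟨h1, h2⟩) hargmin
  have hstep : fillStep k cols (t + 1, false) = cols.set js (colAt cols js ++ [t + 1]) := by
    simp only [fillStep, ← hLdef]
    rw [if_neg (by simp), hargmin]
    rfl
  have hbots : ∀ c, c < cols.length → c ≠ js → (colAt cols c).length < k + 1 →
      (colAt cols js).getLastD 0 < (colAt cols c).getLastD 0 := by
    intro c h1 h2 h3
    rcases lt_or_eq_of_le (hmin c h1 h3) with h | h
    · exact h
    exfalso
    have hbc := getLastD_mem (hI.nen c h1)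
    have hbj := getLastD_mem (hI.nen js hjs.1)
    rw [← h] at hbc
    exact h2 (hI.uniq c h1 js hjs.1 _ hbc hbj)
  have hshorter : ∀ j, j < js → (colAt cols js).length < (colAt cols j).length := by
    intro j hjlt
    by_contra hcon
    push_neg at hcon
    have hmono := hI.hmono j js (le_of_lt hjlt) hjs.1
    have heq : (colAt cols j).length = (colAt cols js).length := le_antisymm hcon hmono
    have hjlen : j < cols.length := lt_trans hjlt hjs.1
    have hjfull : (colAt cols j).length < k + 1 := heq ▸ hjs.2
    have hb := hbots j hjlen (Nat.ne_of_lt hjlt) hjfull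
    have hnej := hI.nen j hjlen
    have hnejs := hI.nen js hjs.1
    have hpos : 0 < (colAt cols js).length := List.length_pos_iff.mpr hnejs
    have hrow := hI.rows j js hjlt hjs.1 ((colAt cols js).length - 1) (by omega)
    rw [← getLastD_eq_getD hnejs] at hrow
    have hEq2 : (colAt cols j).getD ((colAt cols js).length - 1) 0
        = (colAt cols j).getLastD 0 := by
      rw [getLastD_eq_getD hnej, heq]
    omega
  rw [hstep]
  set cols' := cols.set js (colAt cols js ++ [t + 1]) with hcols'
  have hlen' : cols'.length = cols.length := List.length_set
  have hAs : colAt cols' js = colAt cols js ++ [t + 1] := colAt_set_self _ hjs.1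
  have hAo : ∀ j, j ≠ js → colAt cols' j = colAt cols j := fun j h =>
    colAt_set_ne _ (Ne.symm h)
  have hmemjs : ∀ x ∈ colAt cols js, x ≤ (colAt cols js).getLastD 0 :=
    fun x hx => mem_le_getLastD (hI.inc js hjs.1) hx
  have hnewbot : (colAt cols' js).getLastD 0 = t + 1 := by
    rw [hAs, getLastD_concat]
  have hcount : (w.take (t + 1)).count true = (w.take t).count true := by
    rcases Nat.lt_or_ge t w.length with h | h
    · rw [List.take_succ, List.getElem?_eq_getElem h]
      have : w[t] = false := by rwa [List.getD_eq_getElem _ _ h] at hl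
      simp [this]
    · rw [List.take_of_length_le (by omega), List.take_of_length_le (by omega)]
  have hlemem : ∀ j, j < cols.length → ∀ x ∈ colAt cols j, x ≤ t :=
    fun j hj x hx => (hI.mem j hj x hx).2
  have memNew : ∀ j, j < cols.length → ∀ x, x ∈ colAt cols' j →
      x ∈ colAt cols j ∨ (j = js ∧ x = t + 1) := by
    intro j hj x hx
    by_cases h : j = js
    · rw [h, hAs] at hx
      rcases List.mem_append.mp hx with h' | h'
      · rw [h]; exact Or.inl h'
      · simp at h'
        exact Or.inr ⟨h, h'⟩
    · rw [hAo j h] at hx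
      exact Or.inl hx
  constructor
  case blen => rw [hlen', hcount, hI.blen]
  case nen =>
    intro j hj
    rw [hlen'] at hj
    by_cases h : j = js
    · rw [h, hAs]; simp
    · rw [hAo j h]; exact hI.nen j hj
  case hle =>
    intro j hj
    rw [hlen'] at hj
    by_cases h : j = js
    · rw [h, hAs]
      simp only [List.length_append, List.length_singleton]
      have := hjs.2
      omega
    · rw [hAo j h]; exact hI.hle j hj
  case inc =>
    intro j hj
    rw [hlen'] at hj
    by_cases h : j = js
    · rw [h, hAs]
      exact chain'_concat (hI.inc js hjs.1)
        (fun y hy => by have := hlemem js hjs.1 y hy; omega)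
    · rw [hAo j h]; exact hI.inc j hj
  case mem =>
    intro j hj x hx
    rw [hlen'] at hj
    rcases memNew j hj x hx with h | ⟨he, hx'⟩
    · have := hI.mem j hj x h; omega
    · omega
  case cover =>
    intro x hx1 hx2
    rcases Nat.lt_or_ge x (t + 1) with h | h
    · obtain ⟨j, hj, hm⟩ := hI.cover x hx1 (by omega)
      refine ⟨j, by omega, ?_⟩
      by_cases hjj : j = js
      · rw [hjj] at hm ⊢
        rw [hAs]
        exact List.mem_append_left _ hm
      · rw [hAo j hjj]; exact hm
    · have hxe : x = t + 1 := by omega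
      refine ⟨js, by omega, ?_⟩
      rw [hAs, hxe]
      exact List.mem_append_right _ (by simp)
  case uniq =>
    intro j hj j' hj' x hx hx'
    rw [hlen'] at hj hj'
    rcases memNew j hj x hx with h | ⟨he, hx1⟩ <;>
      rcases memNew j' hj' x hx' with h' | ⟨he', hx1'⟩
    · exact hI.uniq j hj j' hj' x h h'
    · have := hlemem j hj x h; omega
    · have := hlemem j' hj' x h'; omega
    · omega
  case sumlen =>
    have := sum_map_set List.length cols js (colAt cols js ++ [t + 1]) hjs.1
    rw [hI.sumlen] at this
    simp only [List.length_append, List.length_singleton] at this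
    rw [← hcols'] at this
    omega
  case hmono =>
    intro j j' hjj hj'
    rw [hlen'] at hj'
    by_cases h' : j' = js
    · rw [h', hAs]
      simp only [List.length_append, List.length_singleton]
      by_cases h : j = js
      · rw [h, hAs]; simp
      · rw [hAo j h]
        have hlt : j < js := lt_of_le_of_ne (h' ▸ hjj) h
        have := hshorter j hlt
        omega
    · rw [hAo j' h']
      by_cases h : j = js
      · rw [h, hAs]
        simp only [List.length_append, List.length_singleton]
        have := hI.hmono js j' (h ▸ hjj) hj'
        omega
      · rw [hAo j h]
        exact hI.hmono j j' hjj hj'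
  case rows =>
    intro j j' hjj hj' i hi
    rw [hlen'] at hj'
    have hjlen : j < cols.length := by omega
    by_cases h' : j' = js
    · rw [h'] at hi hjj ⊢
      rw [hAs] at hi ⊢
      simp only [List.length_append, List.length_singleton] at hi
      have hjne : j ≠ js := Nat.ne_of_lt hjj
      rw [hAo j hjne]
      rcases Nat.lt_or_ge i (colAt cols js).length with hilt | hige
      · rw [getD_concat_lt _ hilt]
        exact hI.rows j js hjj hjs.1 i hilt
      · have hie : i = (colAt cols js).length := by omega
        rw [hie, getD_concat_len]
        have hilen : (colAt cols js).length < (colAt cols j).length := hshorter j hjj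
        have := hlemem j hjlen _ (getD_mem hilen)
        omega
    · rw [hAo j' h'] at hi ⊢
      by_cases h : j = js
      · rw [h, hAs]
        have hle2 : (colAt cols j').length ≤ (colAt cols js).length :=
          hI.hmono js j' (h ▸ le_of_lt hjj) hj'
        rw [getD_concat_lt _ (by omega)]
        exact hI.rows js j' (h ▸ hjj) hj' i hi
      · rw [hAo j h]
        exact hI.rows j j' hjj hj' i hi
  case heads =>
    have hhead : ∀ j, j < cols.length →
        (colAt cols' j).getD 0 0 = (colAt cols j).getD 0 0 := by
      intro j hj
      by_cases h : j = js
      · rw [h, hAs]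
        exact getD_concat_lt _ (List.length_pos_iff.mpr (hI.nen js hjs.1))
      · rw [hAo j h]
    intro x
    constructor
    · rintro ⟨j, hj, he⟩
      rw [hlen'] at hj
      rw [hhead j hj] at he
      have := (hI.heads x).mp ⟨j, hj, he⟩
      exact ⟨this.1, by omega, this.2.2⟩
    · rintro ⟨hx1, hx2, hx3⟩
      rcases Nat.lt_or_ge x (t + 1) with h | h
      · obtain ⟨j, hj, he⟩ := (hI.heads x).mpr ⟨hx1, by omega, hx3⟩
        exact ⟨j, by omega, by rw [hhead j hj]; exact he⟩
      · exfalso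
        have : x = t + 1 := by omega
        rw [this] at hx3
        simp only [Nat.add_sub_cancel] at hx3
        rw [hl] at hx3
        exact Bool.false_ne_true hx3
  case hq =>
    intro j hj hjfull c hc hcj x hx y hy hbx hby
    rw [hlen'] at hj hc
    by_cases h : j = js
    · rw [h, hnewbot] at hbx
      rcases memNew c hc x hx with h' | ⟨he, hx1⟩
      · have := hlemem c hc x h'; omega
      · rcases memNew c hc y hy with h2 | ⟨he2, hy1⟩
        · rw [h, hnewbot] at hby
          have := hlemem c hc y h2
          omega
        · omega
    · rw [hAo j h] at hjfull hbx hby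
      rcases memNew c hc x hx with h1 | ⟨he1, hx1⟩ <;>
        rcases memNew c hc y hy with h2 | ⟨he2, hy1⟩
      · exact hI.hq j hj hjfull c hc hcj x h1 y h2 hbx hby
      · exfalso
        have hb := hbots j hj (fun hh => h hh) hjfull
        rw [he2] at h1
        have := hmemjs x h1
        omega
      · exfalso
        have hb := hbots j hj (fun hh => h hh) hjfull
        rw [he1] at h2
        have := hmemjs y h2
        omega
      · omega
  case hr =>
    intro j hj i hi c hc x hx y hy hxy
    rw [hlen'] at hj hc
    rintro ⟨hax, hyd⟩
    by_cases h : j = js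
    · rw [h, hAs] at hi hax hyd
      simp only [List.length_append, List.length_singleton] at hi
      rcases Nat.lt_or_ge (i + 1) (colAt cols js).length with hlt | hge
      · rw [getD_concat_lt _ (by omega)] at hax
        rw [getD_concat_lt _ hlt] at hyd
        rcases memNew c hc y hy with h2 | ⟨he2, hy1⟩
        · rcases memNew c hc x hx with h1 | ⟨he1, hx1⟩
          · exact hI.hr js hjs.1 i hlt c hc x h1 y h2 hxy ⟨hax, hyd⟩
          · have := hlemem js hjs.1 _ (getD_mem hlt); omega
        · have := hlemem js hjs.1 _ (getD_mem hlt); omega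
      · have hie : i + 1 = (colAt cols js).length := by omega
        have hipos : 0 < (colAt cols js).length := by omega
        rw [getD_concat_lt _ (by omega)] at hax
        rw [hie, getD_concat_len] at hyd
        have hibot : (colAt cols js).getD i 0 = (colAt cols js).getLastD 0 := by
          rw [getLastD_eq_getD (hI.nen js hjs.1)]
          congr 1
          omega
        rw [hibot] at hax
        have hxold : x ∈ colAt cols c := by
          rcases memNew c hc x hx with h1 | ⟨he1, hx1⟩
          · exact h1
          · omega
        have hyold : y ∈ colAt cols c := by
          rcases memNew c hc y hy with h2 | ⟨he2, hy1⟩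
          · exact h2
          · omega
        by_cases hcjs : c = js
        · rw [hcjs] at hxold
          have := hmemjs x hxold
          omega
        · have := hI.hq js hjs.1 hjs.2 c hc hcjs x hxold y hyold hax (by omega)
          omega
    · rw [hAo j h] at hi hax hyd
      rcases memNew c hc y hy with h2 | ⟨he2, hy1⟩
      · rcases memNew c hc x hx with h1 | ⟨he1, hx1⟩
        · exact hI.hr j hj i hi c hc x h1 y h2 hxy ⟨hax, hyd⟩
        · have := hlemem j hj _ (getD_mem hi); omega
      · have := hlemem j hj _ (getD_mem hi); omega

lemma count_bool_length (l : List Bool) : l.count true + l.count false = l.length := by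
  induction l with
  | nil => simp
  | cons hd tl ih =>
      cases hd <;> simp [List.count_cons] <;> omega

lemma fillColsUpTo_succ (k : ℕ) (w : List Bool) (t : ℕ) :
    fillColsUpTo k w (t + 1) = fillStep k (fillColsUpTo k w t) (t + 1, w.getD t false) := by
  unfold fillColsUpTo
  rw [List.range_succ, List.map_append, List.foldl_append]
  rfl

section DyckSide

variable {k n m : ℕ} {w : List Bool}

lemma dyck_room (hm : m = k * n + 1) (hD : IsDyck m n w)
    {t : ℕ} (ht : t < (k + 1) * n) (hl : w.getD t false = false) :
    t < (k + 1) * ((w.take t).count true) := by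
  have hlenw : w.length = m + n := hD.1
  have hcw : w.count true = n := hD.2.1
  have hdy := hD.2.2 (t + 1)
  simp only [upCount, rightCount] at hdy
  have hkn : (k + 1) * n = k * n + n := by ring
  rw [hkn] at ht
  have htw : t < w.length := by rw [hlenw, hm]; omega
  have htake : (w.take (t + 1)).length = t + 1 := by
    rw [List.length_take]; omega
  have hab := count_bool_length (w.take (t + 1))
  rw [htake] at hab
  have hbn : (w.take (t + 1)).count true ≤ n := by
    rw [← hcw]
    exact (List.take_sublist _ _).count_le true
  have hwt : w[t] = false := by rwa [List.getD_eq_getElem _ _ htw] at hl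
  have hbt : (w.take t).count true = (w.take (t + 1)).count true := by
    rw [List.take_succ, List.getElem?_eq_getElem htw, hwt]
    simp
  rw [hbt]
  set b := (w.take (t + 1)).count true with hbdef
  set a := (w.take (t + 1)).count false with hadef
  rcases eq_or_lt_of_le hbn with h | h
  · rw [h]; rw [hkn]; exact ht
  · have h2 : n * a < n * (k * b + 1) := by
      calc n * a ≤ m * b := hdy
        _ = k * n * b + b := by rw [hm]; ring
        _ < k * n * b + n := by omega
        _ = n * (k * b + 1) := by ring
    have h3 : a < k * b + 1 := Nat.lt_of_mul_lt_mul_left h2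
    have h4 : (k + 1) * b = b + k * b := by ring
    omega

lemma dyck_last (hn : 0 < n) (hm : m = k * n + 1) (hD : IsDyck m n w) :
    w.getD ((k + 1) * n) false = false := by
  have hlenw : w.length = m + n := hD.1
  have hcw : w.count true = n := hD.2.1
  cases hb : w.getD ((k + 1) * n) false with
  | false => rfl
  | true =>
    exfalso
    have hkn : (k + 1) * n = k * n + n := by ring
    have htw : (k + 1) * n < w.length := by rw [hlenw, hm, hkn]; omega
    have hwt : w[(k + 1) * n] = true := by rwa [List.getD_eq_getElem _ _ htw] at hb
    have htake1 : w.take ((k + 1) * n + 1) = w := List.take_of_length_le (by omega)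
    have hsp : w.take ((k + 1) * n + 1) = w.take ((k + 1) * n) ++ [true] := by
      rw [List.take_succ, List.getElem?_eq_getElem htw, hwt]; rfl
    have hcnt0 := congrArg (List.count true) (htake1.symm.trans hsp)
    rw [hcw, List.count_append] at hcnt0
    simp at hcnt0
    have hcf := count_bool_length (w.take ((k + 1) * n))
    have hlentake : (w.take ((k + 1) * n)).length = (k + 1) * n := by
      rw [List.length_take]; omega
    rw [hlentake] at hcf
    have hdy := hD.2.2 ((k + 1) * n)
    simp only [upCount, rightCount] at hdy
    set ct := (w.take ((k + 1) * n)).count true with hctd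
    set cf := (w.take ((k + 1) * n)).count false with hcfd
    rw [hkn] at hcf
    have hct : ct + 1 = n := by omega
    have hcfm : cf = m := by rw [hm]; omega
    rw [hcfm] at hdy
    have hctn : ct = n - 1 := by omega
    have h2 : m * (n - 1) + m = m * n := by
      have h : n - 1 + 1 = n := by omega
      calc m * (n - 1) + m = m * ((n - 1) + 1) := by ring
        _ = m * n := by rw [h]
    have h3 : m * n = n * m := by ring
    have hmpos : 0 < m := by rw [hm]; omega
    rw [hctn] at hdy
    omega

lemma dyck_inv (hm : m = k * n + 1) (hD : IsDyck m n w) :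
    ∀ t, t ≤ (k + 1) * n → Inv k w t (fillColsUpTo k w t) := by
  intro t
  induction t with
  | zero =>
      intro _
      have : fillColsUpTo k w 0 = [] := by simp [fillColsUpTo]
      rw [this]
      exact inv_zero k w
  | succ t ih =>
      intro ht
      have hIt := ih (by omega)
      rw [fillColsUpTo_succ]
      cases hlet : w.getD t false with
      | true => exact invS hIt hlet
      | false =>
          refine invW hIt hlet ?_
          rw [hIt.blen]
          exact dyck_room hm hD (by omega) hlet

lemma dyck_len_pred (hm : m = k * n + 1) (hD : IsDyck m n w) :
    w.length - 1 = (k + 1) * n := by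
  have hlenw : w.length = m + n := hD.1
  have hkn : (k + 1) * n = k * n + n := by ring
  rw [hlenw, hm, hkn]
  omega

lemma dyck_count_pred (hn : 0 < n) (hm : m = k * n + 1) (hD : IsDyck m n w) :
    (w.take ((k + 1) * n)).count true = n := by
  have hlenw : w.length = m + n := hD.1
  have hcw : w.count true = n := hD.2.1
  have hkn : (k + 1) * n = k * n + n := by ring
  have htw : (k + 1) * n < w.length := by rw [hlenw, hm, hkn]; omega
  have hwt : w[(k + 1) * n] = false := by
    have := dyck_last hn hm hD
    rwa [List.getD_eq_getElem _ _ htw] at this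
  have htake1 : w.take ((k + 1) * n + 1) = w := List.take_of_length_le (by omega)
  have hsp : w.take ((k + 1) * n + 1) = w.take ((k + 1) * n) ++ [false] := by
    rw [List.take_succ, List.getElem?_eq_getElem htw, hwt]; rfl
  have h := congrArg (List.count true) (htake1.symm.trans hsp)
  rw [hcw, List.count_append] at h
  simp at h
  omega

lemma sum_map_length_le (c : ℕ) : ∀ (cols : List (List ℕ)),
    (∀ j < cols.length, (colAt cols j).length ≤ c) →
    (cols.map List.length).sum ≤ c * cols.length
  | [], _ => by simp
  | l :: ls, h => by
      simp only [List.map_cons, List.sum_cons, List.length_cons]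
      have h0 := h 0 (by simp)
      simp only [colAt, List.getD_cons_zero] at h0
      have hrec := sum_map_length_le c ls (fun j hj => by
        have := h (j + 1) (by simp; omega)
        simpa only [colAt, List.getD_cons_succ] using this)
      rw [Nat.mul_succ]
      omega

lemma all_cols_full (c : ℕ) : ∀ (cols : List (List ℕ)),
    (∀ j < cols.length, (colAt cols j).length ≤ c) →
    (cols.map List.length).sum = c * cols.length →
    ∀ j < cols.length, (colAt cols j).length = c
  | [], _, _ => by simp
  | l :: ls, h, hs => by
      have hrec0 : ∀ j < ls.length, (colAt ls j).length ≤ c := fun j hj => by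
        have := h (j + 1) (by simp; omega)
        simpa only [colAt, List.getD_cons_succ] using this
      have hsle := sum_map_length_le c ls hrec0
      have h0 := h 0 (by simp)
      simp only [colAt, List.getD_cons_zero] at h0
      simp only [List.map_cons, List.sum_cons, List.length_cons, Nat.mul_succ] at hs
      have hl0 : l.length = c := by omega
      have hs' : (ls.map List.length).sum = c * ls.length := by omega
      intro j hj
      match j with
      | 0 => simpa [colAt] using hl0
      | j + 1 =>
          have hj' : j < ls.length := by simp at hj; omega
          have := all_cols_full c ls hrec0 hs' j hj'
          simpa only [colAt, List.getD_cons_succ] using this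

/-- Summary facts about the final state on a Dyck word. -/
lemma dyck_final (hn : 0 < n) (hm : m = k * n + 1) (hD : IsDyck m n w) :
    Inv k w ((k + 1) * n) (fillCols k w) ∧ (fillCols k w).length = n ∧
    (∀ j < n, (colAt (fillCols k w) j).length = k + 1) := by
  have hfc : fillCols k w = fillColsUpTo k w ((k + 1) * n) := by
    rw [fillCols, dyck_len_pred hm hD]
  have hI : Inv k w ((k + 1) * n) (fillCols k w) := by
    rw [hfc]; exact dyck_inv hm hD _ le_rfl
  have hlen : (fillCols k w).length = n := by
    rw [hI.blen]; exact dyck_count_pred hn hm hD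
  refine ⟨hI, hlen, ?_⟩
  intro j hj
  refine all_cols_full (k + 1) (fillCols k w) (fun j' hj' => hI.hle j' hj') ?_ j
    (by rw [hlen]; omega)
  rw [hI.sumlen, hlen]

lemma fillTableau_eq (k n : ℕ) (w : List Bool) (i : Fin (k + 1)) (j : Fin n) :
    fillTableau k n w i j = (colAt (fillCols k w) j).getD i 0 := rfl

lemma mapsTo_fuss (hn : 0 < n) (hm : m = k * n + 1) (hD : IsDyck m n w) :
    IsFussTableau k n (fillTableau k n w) := by
  obtain ⟨hI, hlen, hfull⟩ := dyck_final hn hm hD (k := k)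
  have hjlt : ∀ j : Fin n, (j : ℕ) < (fillCols k w).length := fun j => by
    rw [hlen]; exact j.2
  have hilt : ∀ (i : Fin (k + 1)) (j : Fin n),
      (i : ℕ) < (colAt (fillCols k w) (j : ℕ)).length := by
    intro i j
    rw [hfull j j.2]
    exact i.2
  have hTmem : ∀ (i : Fin (k + 1)) (j : Fin n),
      fillTableau k n w i j ∈ colAt (fillCols k w) (j : ℕ) := by
    intro i j
    rw [fillTableau_eq]
    exact getD_mem (hilt i j)
  constructor
  · refine ⟨?_, ?_, ?_, ?_⟩
    · intro i j
      have := hI.mem j (hjlt j) _ (hTmem i j)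
      rw [Finset.mem_Icc]
      have hkn : (k + 1) * n = k * n + n := by ring
      omega
    · intro p q hpq
      simp only at hpq
      have hcol : (p.2 : ℕ) = (q.2 : ℕ) := by
        refine hI.uniq _ (hjlt p.2) _ (hjlt q.2) (fillTableau k n w p.1 p.2) (hTmem p.1 p.2) ?_
        rw [hpq]; exact hTmem q.1 q.2
      have hc2 : p.2 = q.2 := Fin.ext hcol
      have hrow : (p.1 : ℕ) = (q.1 : ℕ) := by
        by_contra hne
        rw [fillTableau_eq, fillTableau_eq, hc2] at hpq
        rcases Nat.lt_or_ge (p.1 : ℕ) (q.1 : ℕ) with h | h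
        · have := chain'_getD_lt (hI.inc _ (hjlt q.2)) h (hilt q.1 q.2)
          omega
        · have h' : (q.1 : ℕ) < (p.1 : ℕ) := by omega
          have := chain'_getD_lt (hI.inc _ (hjlt q.2)) h' (hilt p.1 q.2)
          omega
      exact Prod.ext (Fin.ext hrow) hc2
    · intro i
      intro j j' hjj
      show fillTableau k n w i j < fillTableau k n w i j'
      rw [fillTableau_eq, fillTableau_eq]
      exact hI.rows j j' (by exact_mod_cast hjj) (hjlt j') i (hilt i j')
    · intro j
      intro i i' hii
      show fillTableau k n w i j < fillTableau k n w i' j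
      rw [fillTableau_eq, fillTableau_eq]
      exact chain'_getD_lt (hI.inc _ (hjlt j)) (by exact_mod_cast hii) (hilt i' j)
  · intro i hi j r r' c hrr
    rintro ⟨h1, h2, h3⟩
    have hb : fillTableau k n w r c < fillTableau k n w r' c := h2
    refine hI.hr j (hjlt j) i ?_ c (hjlt c) (fillTableau k n w r c) (hTmem r c)
      (fillTableau k n w r' c) (hTmem r' c) hb ⟨?_, ?_⟩
    · rw [hfull j j.2]; omega
    · exact h1
    · exact h3

end DyckSide

section Surj

variable {k n : ℕ}

/-- The word read off from the top row of a tableau. -/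
noncomputable def wordOf (k n : ℕ) (T : Fin (k + 1) → Fin n → ℕ) : List Bool :=
  List.ofFn (fun i : Fin ((k + 1) * n + 1) => decide (∃ j : Fin n, T 0 j = (i : ℕ) + 1))

/-- Number of entries of column `j` that are `≤ t`. -/
noncomputable def cnt (T : Fin (k + 1) → Fin n → ℕ) (t : ℕ) (j : Fin n) : ℕ :=
  (Finset.univ.filter (fun i : Fin (k + 1) => T i j ≤ t)).card

/-- Number of columns whose top entry is `≤ t`. -/
noncomputable def btop (T : Fin (k + 1) → Fin n → ℕ) (t : ℕ) : ℕ :=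
  (Finset.univ.filter (fun j : Fin n => T 0 j ≤ t)).card

noncomputable def colList (T : Fin (k + 1) → Fin n → ℕ) (t : ℕ) (j : Fin n) : List ℕ :=
  (List.ofFn (fun i : Fin (k + 1) => T i j)).take (cnt T t j)

noncomputable def colsUpTo (T : Fin (k + 1) → Fin n → ℕ) (t : ℕ) : List (List ℕ) :=
  ((List.finRange n).take (btop T t)).map (fun j => colList T t j)

variable {T : Fin (k + 1) → Fin n → ℕ}

lemma cnt_le (t : ℕ) (j : Fin n) : cnt T t j ≤ k + 1 := by
  have := Finset.card_filter_le (Finset.univ : Finset (Fin (k + 1)))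
    (fun i => T i j ≤ t)
  simpa [cnt] using this

lemma btop_le (t : ℕ) : btop T t ≤ n := by
  have := Finset.card_filter_le (Finset.univ : Finset (Fin n)) (fun j => T 0 j ≤ t)
  simpa [btop] using this

lemma cnt_iff (hcol : StrictMono (fun i => T i j)) (t : ℕ) (i : Fin (k + 1)) :
    T i j ≤ t ↔ (i : ℕ) < cnt T t j := by
  constructor
  · intro h
    have hsub : Finset.Iic i ⊆ Finset.univ.filter (fun i' : Fin (k + 1) => T i' j ≤ t) := by
      intro i' hi'
      rw [Finset.mem_Iic] at hi'
      rw [Finset.mem_filter]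
      exact ⟨Finset.mem_univ _, le_trans (hcol.monotone hi') h⟩
    have := Finset.card_le_card hsub
    rw [Fin.card_Iic] at this
    unfold cnt
    omega
  · intro h
    by_contra hc
    push_neg at hc
    have hsub : Finset.univ.filter (fun i' : Fin (k + 1) => T i' j ≤ t) ⊆ Finset.Iio i := by
      intro i' hi'
      rw [Finset.mem_filter] at hi'
      rw [Finset.mem_Iio]
      have : T i' j < T i j := lt_of_le_of_lt hi'.2 hc
      exact hcol.lt_iff_lt.mp this
    have := Finset.card_le_card hsub
    rw [Fin.card_Iio] at this
    unfold cnt at h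
    omega

lemma btop_iff (hrow : StrictMono (T 0)) (t : ℕ) (j : Fin n) :
    T 0 j ≤ t ↔ (j : ℕ) < btop T t := by
  constructor
  · intro h
    have hsub : Finset.Iic j ⊆ Finset.univ.filter (fun j' : Fin n => T 0 j' ≤ t) := by
      intro j' hj'
      rw [Finset.mem_Iic] at hj'
      rw [Finset.mem_filter]
      exact ⟨Finset.mem_univ _, le_trans (hrow.monotone hj') h⟩
    have := Finset.card_le_card hsub
    rw [Fin.card_Iic] at this
    unfold btop
    omega
  · intro h
    by_contra hc
    push_neg at hc
    have hsub : Finset.univ.filter (fun j' : Fin n => T 0 j' ≤ t) ⊆ Finset.Iio j := by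
      intro j' hj'
      rw [Finset.mem_filter] at hj'
      rw [Finset.mem_Iio]
      exact hrow.lt_iff_lt.mp (lt_of_le_of_lt hj'.2 hc)
    have := Finset.card_le_card hsub
    rw [Fin.card_Iio] at this
    unfold btop at h
    omega

lemma length_colList (t : ℕ) (j : Fin n) : (colList T t j).length = cnt T t j := by
  rw [colList, List.length_take, List.length_ofFn]
  exact min_eq_left (cnt_le t j)

lemma getD_colList (t : ℕ) (j : Fin n) {i : ℕ} (hi : i < cnt T t j) :
    (colList T t j).getD i 0 = T ⟨i, lt_of_lt_of_le hi (cnt_le t j)⟩ j := by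
  have hlen : i < (colList T t j).length := by rw [length_colList]; exact hi
  rw [List.getD_eq_getElem _ _ hlen]
  simp only [colList]
  rw [List.getElem_take, List.getElem_ofFn]

lemma length_colsUpTo (t : ℕ) : (colsUpTo T t).length = btop T t := by
  rw [colsUpTo, List.length_map, List.length_take, List.length_finRange]
  exact min_eq_left (btop_le t)

lemma colAt_colsUpTo (t : ℕ) {j : ℕ} (hj : j < btop T t) :
    colAt (colsUpTo T t) j = colList T t ⟨j, lt_of_lt_of_le hj (btop_le t)⟩ := by
  have hjn : j < n := lt_of_lt_of_le hj (btop_le t)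
  have hjl : j < (colsUpTo T t).length := by rw [length_colsUpTo]; exact hj
  rw [colAt, List.getD_eq_getElem _ _ hjl]
  simp only [colsUpTo]
  rw [List.getElem_map, List.getElem_take, List.getElem_finRange]
  rfl

lemma cols_ext {c1 c2 : List (List ℕ)} (hl : c1.length = c2.length)
    (h : ∀ j < c1.length, colAt c1 j = colAt c2 j) : c1 = c2 := by
  refine List.ext_getElem hl (fun j h1 h2 => ?_)
  have := h j h1
  rwa [colAt, colAt, List.getD_eq_getElem _ _ h1, List.getD_eq_getElem _ _ h2] at this

lemma wordOf_getD {i : ℕ} (hi : i < (k + 1) * n + 1) :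
    (wordOf k n T).getD i false = decide (∃ j : Fin n, T 0 j = i + 1) := by
  have hl : i < (wordOf k n T).length := by rw [wordOf, List.length_ofFn]; exact hi
  rw [List.getD_eq_getElem _ _ hl]
  simp only [wordOf]
  rw [List.getElem_ofFn]

lemma wordOf_length : (wordOf k n T).length = (k + 1) * n + 1 := by
  rw [wordOf, List.length_ofFn]

end Surj

section Match

variable {k n : ℕ} {T : Fin (k + 1) → Fin n → ℕ}

lemma take_ofFn_succ {α : Type*} {N : ℕ} (f : Fin N → α) {r : ℕ} (hr : r < N) :
    (List.ofFn f).take (r + 1) = (List.ofFn f).take r ++ [f ⟨r, hr⟩] := by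
  rw [List.take_succ]
  congr 1
  rw [List.getElem?_eq_getElem (by rw [List.length_ofFn]; exact hr), List.getElem_ofFn]
  rfl

theorem fill_match (hT : IsFussTableau k n T) :
    ∀ t, t ≤ (k + 1) * n → fillColsUpTo k (wordOf k n T) t = colsUpTo T t := by
  classical
  obtain ⟨⟨hmemI, hinj, hrow, hcol⟩, hnb⟩ := hT
  have hone : ∀ (i : Fin (k + 1)) (j : Fin n), 1 ≤ T i j :=
    fun i j => (Finset.mem_Icc.mp (hmemI i j)).1
  have hleN : ∀ (i : Fin (k + 1)) (j : Fin n), T i j ≤ (k + 1) * n :=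
    fun i j => (Finset.mem_Icc.mp (hmemI i j)).2
  have hTinj : ∀ (i i' : Fin (k + 1)) (j j' : Fin n), T i j = T i' j' → i = i' ∧ j = j' := by
    intro i i' j j' h
    have := hinj (a₁ := (i, j)) (a₂ := (i', j')) h
    exact ⟨congrArg Prod.fst this, congrArg Prod.snd this⟩
  have hvals : ∀ x, 1 ≤ x → x ≤ (k + 1) * n → ∃ p : Fin (k + 1) × Fin n, T p.1 p.2 = x := by
    intro x hx1 hx2
    have himg : Finset.image (fun p : Fin (k + 1) × Fin n => T p.1 p.2) Finset.univ
        = Finset.Icc 1 ((k + 1) * n) := by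
      refine Finset.eq_of_subset_of_card_le ?_ ?_
      · intro y hy
        rw [Finset.mem_image] at hy
        obtain ⟨p, _, hp⟩ := hy
        rw [← hp]
        exact hmemI p.1 p.2
      · rw [Finset.card_image_of_injective _ hinj, Nat.card_Icc]
        simp
    have : x ∈ Finset.Icc 1 ((k + 1) * n) := Finset.mem_Icc.mpr ⟨hx1, hx2⟩
    rw [← himg, Finset.mem_image] at this
    obtain ⟨p, _, hp⟩ := this
    exact ⟨p, hp⟩
  intro t
  induction t with
  | zero =>
      intro _
      have h1 : fillColsUpTo k (wordOf k n T) 0 = [] := by simp [fillColsUpTo]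
      have h2 : colsUpTo T 0 = [] := by
        have hb : btop T 0 = 0 := by
          rw [btop, Finset.card_eq_zero, Finset.filter_eq_empty_iff]
          intro j _
          have := hone 0 j
          omega
        rw [colsUpTo, hb]
        simp
      rw [h1, h2]
  | succ t ih =>
      intro ht
      have hIH := ih (by omega)
      rw [fillColsUpTo_succ, hIH]
      obtain ⟨⟨r, j0⟩, hp⟩ := hvals (t + 1) (by omega) ht
      simp only at hp
      -- counting facts
      have hcnt_t_j0 : cnt T t j0 = (r : ℕ) := by
        have h1 := (cnt_iff (hcol j0) t r).not
        have h2 : ¬ T r j0 ≤ t := by omega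
        have h3 : cnt T t j0 ≤ (r : ℕ) := by
          by_contra hcc
          push_neg at hcc
          have h4 := (cnt_iff (hcol j0) t r).mpr (by omega)
          rw [hp] at h4
          omega
        rcases Nat.eq_zero_or_pos (r : ℕ) with h0 | h0
        · omega
        · have hrm : ((r : ℕ) - 1) < k + 1 := by omega
          have h4 : T ⟨(r : ℕ) - 1, hrm⟩ j0 ≤ t := by
            have : (⟨(r : ℕ) - 1, hrm⟩ : Fin (k + 1)) < r := by
              rw [Fin.lt_def]; simp only [Fin.val_mk]; omega
            have := hcol j0 this
            simp only at this
            omega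
          have := (cnt_iff (hcol j0) t ⟨(r : ℕ) - 1, hrm⟩).mp h4
          simp only at this
          omega
      have hcnt_t1_j0 : cnt T (t + 1) j0 = (r : ℕ) + 1 := by
        have h1 := (cnt_iff (hcol j0) (t + 1) r).mp (by rw [hp])
        have h2 : cnt T (t + 1) j0 ≤ (r : ℕ) + 1 := by
          by_contra hcc
          push_neg at hcc
          have hrm : (r : ℕ) + 1 < k + 1 := by
            have := cnt_le (T := T) (t + 1) j0
            omega
          have h3 := (cnt_iff (hcol j0) (t + 1) ⟨(r : ℕ) + 1, hrm⟩).mpr (by simp; omega)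
          have h4 : T r j0 < T ⟨(r : ℕ) + 1, hrm⟩ j0 := by
            apply hcol j0
            rw [Fin.lt_def]; simp
          rw [hp] at h4
          omega
        omega
      have hcnt_other : ∀ j : Fin n, j ≠ j0 → cnt T (t + 1) j = cnt T t j := by
        intro j hj
        unfold cnt
        congr 1
        apply Finset.filter_congr
        intro i _
        constructor
        · intro h
          rcases Nat.lt_or_ge (T i j) (t + 1) with h' | h'
          · omega
          · exfalso
            have he : T i j = t + 1 := by omega
            rw [← hp] at he
            exact hj (hTinj i r j j0 he).2
        · intro h
          omega
      by_cases hr0 : r = 0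
      · -- letter S : new column
        rw [hr0] at hp
        have hb : (wordOf k n T).getD t false = true := by
          rw [wordOf_getD (by omega)]
          exact decide_eq_true ⟨j0, hp⟩
        rw [hb]
        have hstep : fillStep k (colsUpTo T t) (t + 1, true)
            = colsUpTo T t ++ [[t + 1]] := by simp [fillStep]
        rw [hstep]
        -- btop increments, j0 is the new column
        have hj0b : (j0 : ℕ) = btop T t := by
          have h1 : ¬ (j0 : ℕ) < btop T t := by
            rw [← btop_iff (hrow 0) t j0]
            omega
          have h2 : ¬ btop T t < (j0 : ℕ) := by
            intro hlt
            have hbn : btop T t < n := lt_trans hlt j0.2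
            have h3 : ¬ T 0 ⟨btop T t, hbn⟩ ≤ t := by
              rw [btop_iff (hrow 0) t ⟨btop T t, hbn⟩]
              simp
            have h4 : T 0 ⟨btop T t, hbn⟩ < T 0 j0 := by
              apply hrow 0
              rw [Fin.lt_def]; simpa using hlt
            omega
          omega
        have hbt1 : btop T (t + 1) = btop T t + 1 := by
          have h1 : (j0 : ℕ) < btop T (t + 1) := by
            rw [← btop_iff (hrow 0) (t + 1) j0]
            omega
          have h2 : btop T (t + 1) ≤ (j0 : ℕ) + 1 := by
            by_contra hcc
            push_neg at hcc
            have hj1n : (j0 : ℕ) + 1 < n := by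
              have := btop_le (T := T) (t + 1)
              omega
            have h3 := (btop_iff (hrow 0) (t + 1) ⟨(j0 : ℕ) + 1, hj1n⟩).mpr (by simpa using hcc)
            have h4 : T 0 j0 < T 0 ⟨(j0 : ℕ) + 1, hj1n⟩ := by
              apply hrow 0
              rw [Fin.lt_def]; simp
            omega
          omega
        refine (cols_ext ?_ ?_).symm
        · rw [List.length_append, length_colsUpTo, length_colsUpTo, hbt1]
          simp
        · intro j hj
          rw [length_colsUpTo, hbt1] at hj
          rcases Nat.lt_or_ge j (btop T t) with hlt | hge
          · rw [colAt_colsUpTo (T := T) (t + 1) (by omega)]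
            rw [colAt_append_lt _ _ (by rw [length_colsUpTo]; exact hlt)]
            rw [colAt_colsUpTo (T := T) t hlt]
            unfold colList
            rw [hcnt_other ⟨j, lt_of_lt_of_le hlt (btop_le t)⟩
              (by intro hh; have := congrArg Fin.val hh; simp at this; omega)]
          · have hje : j = btop T t := by omega
            have hcolsl : (colsUpTo T t).length = btop T t := length_colsUpTo t
            rw [hje, ← hcolsl, colAt_append_len, hcolsl]
            rw [colAt_colsUpTo (T := T) (t + 1) (by omega)]
            have hjeq : (⟨btop T t, lt_of_lt_of_le (by omega) (btop_le (T := T) (t + 1))⟩ : Fin n) = j0 :=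
              Fin.ext (by simp [hj0b])
            rw [hjeq]
            unfold colList
            have hc1 : cnt T (t + 1) j0 = 0 + 1 := by
              rw [hcnt_t1_j0, hr0]
              rfl
            rw [hc1]
            rw [take_ofFn_succ (fun i : Fin (k + 1) => T i j0) (show 0 < k + 1 by omega)]
            simp only [List.take_zero, List.nil_append]
            exact congrArg (fun x => [x]) hp
      · -- letter W
        have hb : (wordOf k n T).getD t false = false := by
          rw [wordOf_getD (by omega)]
          simp only [decide_eq_false_iff_not]
          rintro ⟨j, hj⟩
          rw [← hp] at hj
          exact hr0 (hTinj 0 r j j0 hj).1.symm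
        rw [hb]
        have hrpos : 0 < (r : ℕ) := by
          rcases Nat.eq_zero_or_pos (r : ℕ) with h | h
          · exact absurd (Fin.ext h) hr0
          · exact h
        have hj0lt : (j0 : ℕ) < btop T t := by
          rw [← btop_iff (hrow 0) t j0]
          have : T 0 j0 < T r j0 := by
            apply hcol j0
            rw [Fin.lt_def]; simpa using hrpos
          omega
        set cols := colsUpTo T t with hcolsdef
        have hcolsl : cols.length = btop T t := length_colsUpTo t
        -- heights of the columns
        have hheight : ∀ (j : ℕ) (hj : j < btop T t),
            (colAt cols j).length = cnt T t ⟨j, lt_of_lt_of_le hj (btop_le t)⟩ := by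
          intro j hj
          rw [hcolsdef, colAt_colsUpTo t hj, length_colList]
        have hbotval : ∀ (j : ℕ) (hj : j < btop T t) (hpos : 0 < cnt T t ⟨j, lt_of_lt_of_le hj (btop_le t)⟩),
            (colAt cols j).getLastD 0
              = T ⟨cnt T t ⟨j, lt_of_lt_of_le hj (btop_le t)⟩ - 1, by
                  have := cnt_le (T := T) t ⟨j, lt_of_lt_of_le hj (btop_le t)⟩; omega⟩
                ⟨j, lt_of_lt_of_le hj (btop_le t)⟩ := by
          intro j hj hpos
          have hne : colAt cols j ≠ [] := by
            rw [hcolsdef, colAt_colsUpTo t hj]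
            intro hh
            have := length_colList (T := T) t ⟨j, lt_of_lt_of_le hj (btop_le t)⟩
            rw [hh] at this
            simp at this
            omega
          rw [getLastD_eq_getD hne, hheight j hj]
          rw [hcolsdef, colAt_colsUpTo t hj, getD_colList _ _ (by omega)]
        -- restatements with a clean `Fin n` argument
        have hheight' : ∀ (j : Fin n), (j : ℕ) < btop T t →
            (colAt cols (j : ℕ)).length = cnt T t j := by
          intro j hj
          rw [hheight (j : ℕ) hj]
        have hcnt_pos : ∀ (j : Fin n), (j : ℕ) < btop T t → 0 < cnt T t j := by
          intro j hj
          have h0 : T 0 j ≤ t := (btop_iff (hrow 0) t j).mpr hj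
          have := (cnt_iff (hcol j) t 0).mp h0
          omega
        have hbot' : ∀ (j : Fin n) (hj : (j : ℕ) < btop T t),
            (colAt cols (j : ℕ)).getLastD 0
              = T ⟨cnt T t j - 1, by have := cnt_le (T := T) t j; omega⟩ j := by
          intro j hj
          have h := hbotval (j : ℕ) hj (by
            rw [Fin.eta j (lt_of_lt_of_le hj (btop_le t))]
            exact hcnt_pos j hj)
          rw [h]
        have hj0height : (colAt cols (j0 : ℕ)).length = (r : ℕ) := by
          rw [hheight' j0 hj0lt, hcnt_t_j0]
        -- the candidate list
        set L := ((List.range cols.length).filter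
            (fun j => (cols.getD j []).length < k + 1)) with hLdef
        have hmemL : ∀ j, j ∈ L ↔ j < btop T t ∧ (colAt cols j).length < k + 1 := by
          intro j
          simp [hLdef, List.mem_filter, List.mem_range, colAt, hcolsl]
        have hj0L : (j0 : ℕ) ∈ L := (hmemL _).2 ⟨hj0lt, by rw [hj0height]; exact r.2⟩
        -- strict minimality of the bottom of column j0
        have hrm1lt : (r : ℕ) - 1 < k + 1 := by omega
        have hb'lt : T ⟨(r : ℕ) - 1, hrm1lt⟩ j0 < t + 1 := by
          have hlt : (⟨(r : ℕ) - 1, hrm1lt⟩ : Fin (k + 1)) < r := by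
            rw [Fin.lt_def]; simp only [Fin.val_mk]; omega
          have := hcol j0 hlt
          simp only at this
          omega
        have hstrict : ∀ c, c < btop T t → (colAt cols c).length < k + 1 → c ≠ (j0 : ℕ) →
            (colAt cols (j0 : ℕ)).getLastD 0 < (colAt cols c).getLastD 0 := by
          intro c hcb hcfull hne
          have hcn : c < n := lt_of_lt_of_le hcb (btop_le t)
          have hcntc : cnt T t ⟨c, hcn⟩ = (colAt cols c).length := (hheight' ⟨c, hcn⟩ hcb).symm
          have hcpos : 0 < cnt T t ⟨c, hcn⟩ := hcnt_pos ⟨c, hcn⟩ hcb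
          have hcfull' : cnt T t ⟨c, hcn⟩ < k + 1 := by omega
          have hbc := hbot' ⟨c, hcn⟩ hcb
          have hbj := hbot' j0 hj0lt
          have hcltk : cnt T t ⟨c, hcn⟩ - 1 < k + 1 := by omega
          have hd_gt : ¬ T ⟨cnt T t ⟨c, hcn⟩, hcfull'⟩ ⟨c, hcn⟩ ≤ t := by
            rw [cnt_iff (hcol ⟨c, hcn⟩) t]
            simp
          have hd_ne : T ⟨cnt T t ⟨c, hcn⟩, hcfull'⟩ ⟨c, hcn⟩ ≠ t + 1 := by
            intro hh
            rw [← hp] at hh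
            have h2 := (hTinj _ r _ j0 hh).2
            exact hne (congrArg Fin.val h2)
          have hd_big : t + 1 < T ⟨cnt T t ⟨c, hcn⟩, hcfull'⟩ ⟨c, hcn⟩ := by omega
          rw [hbc, hbj]
          have hAA : T ⟨cnt T t j0 - 1, by have := cnt_le (T := T) t j0; omega⟩ j0
              = T ⟨(r : ℕ) - 1, hrm1lt⟩ j0 := by
            congr 1
            exact Fin.ext (by simp [hcnt_t_j0])
          rw [hAA]
          rcases lt_trichotomy (T ⟨(r : ℕ) - 1, hrm1lt⟩ j0)
              (T ⟨cnt T t ⟨c, hcn⟩ - 1, hcltk⟩ ⟨c, hcn⟩) with h | h | h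
          · exact h
          · exfalso
            have h2 := (hTinj _ _ _ _ h).2
            exact hne (congrArg Fin.val h2).symm
          · exfalso
            have hi2 : (cnt T t ⟨c, hcn⟩ - 1) + 1 < k + 1 := by omega
            have hnb2 := hnb ⟨cnt T t ⟨c, hcn⟩ - 1, hcltk⟩ hi2 ⟨c, hcn⟩
              ⟨(r : ℕ) - 1, hrm1lt⟩ r j0
              (by rw [Fin.lt_def]; simp only [Fin.val_mk]; omega)
            apply hnb2
            refine ⟨h, ?_, ?_⟩
            · have hlt : (⟨(r : ℕ) - 1, hrm1lt⟩ : Fin (k + 1)) < r := by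
                rw [Fin.lt_def]; simp only [Fin.val_mk]; omega
              exact hcol j0 hlt
            · have hie : (⟨(cnt T t ⟨c, hcn⟩ - 1) + 1, hi2⟩ : Fin (k + 1))
                  = ⟨cnt T t ⟨c, hcn⟩, hcfull'⟩ := Fin.ext (by simp; omega)
              rw [hie, hp]
              exact hd_big
        -- the argmin is j0
        have hargmin : L.argmin (fun j => (cols.getD j []).getLastD 0) = some (j0 : ℕ) := by
          rcases hA : L.argmin (fun j => (cols.getD j []).getLastD 0) with _ | mm
          · rw [List.argmin_eq_none] at hA
            rw [hA] at hj0L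
            exact absurd hj0L List.not_mem_nil
          · have hmL := List.argmin_mem hA
            have hle := List.le_of_mem_argmin hj0L hA
            by_cases he : mm = (j0 : ℕ)
            · rw [he]
            · exfalso
              obtain ⟨hmb, hmfull⟩ := (hmemL mm).1 hmL
              have := hstrict mm hmb hmfull he
              have hca : ∀ j : ℕ, cols.getD j [] = colAt cols j := fun _ => rfl
              rw [hca, hca] at hle
              omega
        have hstep : fillStep k cols (t + 1, false)
            = cols.set (j0 : ℕ) (colAt cols (j0 : ℕ) ++ [t + 1]) := by
          simp only [fillStep, ← hLdef]
          rw [if_neg (by simp), hargmin]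
          rfl
        rw [hstep]
        -- btop does not change
        have hbt_eq : btop T (t + 1) = btop T t := by
          unfold btop
          congr 1
          apply Finset.filter_congr
          intro j _
          constructor
          · intro h
            rcases Nat.lt_or_ge (T 0 j) (t + 1) with h' | h'
            · omega
            · exfalso
              have he : T 0 j = t + 1 := by omega
              rw [← hp] at he
              have := (hTinj 0 r j j0 he).1
              exact hr0 this.symm
          · intro h
            omega
        refine cols_ext ?_ ?_
        · rw [List.length_set, hcolsl, length_colsUpTo, hbt_eq]
        · intro j hj
          rw [List.length_set, hcolsl] at hj
          have hjn : j < n := lt_of_lt_of_le hj (btop_le t)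
          have hjb1 : j < btop T (t + 1) := by rw [hbt_eq]; exact hj
          rw [colAt_colsUpTo (T := T) (t + 1) hjb1]
          by_cases hjj : j = (j0 : ℕ)
          · subst hjj
            rw [colAt_set_self _ (by rw [hcolsl]; exact hj0lt)]
            have hfin0 : (⟨(j0 : ℕ), lt_of_lt_of_le hjb1 (btop_le (t + 1))⟩ : Fin n) = j0 :=
              Fin.eta j0 _
            rw [hfin0]
            rw [hcolsdef, colAt_colsUpTo (T := T) t hj0lt]
            have hfin1 : (⟨(j0 : ℕ), lt_of_lt_of_le hj0lt (btop_le t)⟩ : Fin n) = j0 :=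
              Fin.eta j0 _
            rw [hfin1]
            unfold colList
            rw [hcnt_t1_j0, hcnt_t_j0]
            rw [take_ofFn_succ (fun i : Fin (k + 1) => T i j0) r.2]
            congr 1
            exact congrArg (fun x => [x]) hp.symm
          · rw [colAt_set_ne _ (fun hh => hjj hh.symm)]
            rw [hcolsdef, colAt_colsUpTo (T := T) t hj]
            unfold colList
            rw [hcnt_other ⟨j, lt_of_lt_of_le hjb1 (btop_le (t + 1))⟩
              (by intro hh; exact hjj (congrArg Fin.val hh))]

end Match

section Final

variable {k n m : ℕ} {T : Fin (k + 1) → Fin n → ℕ} {w : List Bool}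

theorem count_ofFn_true' (N : ℕ) (f : Fin N → Bool) :
    (List.ofFn f).count true = (Finset.univ.filter (fun i => f i = true)).card := by
  rw [List.ofFn_eq_map, List.count_eq_countP, List.countP_map, Fin.univ_def,
    Finset.card, Finset.filter]
  simp [Multiset.countP, List.countP_eq_length_filter, Function.comp]
  congr 1

lemma fill_eq_of_fuss (hT : IsFussTableau k n T) :
    fillTableau k n (wordOf k n T) = T := by
  have hrow0 := hT.1.2.2.1 0
  have hcol := hT.1.2.2.2
  have hmemI := hT.1.1
  have hleN : ∀ (i : Fin (k + 1)) (j : Fin n), T i j ≤ (k + 1) * n :=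
    fun i j => (Finset.mem_Icc.mp (hmemI i j)).2
  have hfc : fillCols k (wordOf k n T) = colsUpTo T ((k + 1) * n) := by
    rw [fillCols, wordOf_length]
    simp only [Nat.add_sub_cancel]
    exact fill_match hT _ le_rfl
  funext i j
  rw [fillTableau_eq, hfc]
  have hbN : (j : ℕ) < btop T ((k + 1) * n) :=
    (btop_iff hrow0 _ j).mp (hleN 0 j)
  rw [colAt_colsUpTo (T := T) _ hbN]
  have hfin : (⟨(j : ℕ), lt_of_lt_of_le hbN (btop_le _)⟩ : Fin n) = j := Fin.eta j _
  rw [hfin]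
  have hcntN : cnt T ((k + 1) * n) j = k + 1 := by
    have h1 := (cnt_iff (hcol j) ((k + 1) * n) ⟨k, by omega⟩).mp (hleN ⟨k, by omega⟩ j)
    have h2 := cnt_le (T := T) ((k + 1) * n) j
    simp only at h1
    omega
  rw [getD_colList _ _ (by rw [hcntN]; exact i.2)]

lemma count_wordOf (hT : IsFussTableau k n T) : (wordOf k n T).count true = n := by
  classical
  have hrow0 := hT.1.2.2.1 0
  have hone : ∀ j : Fin n, 1 ≤ T 0 j :=
    fun j => (Finset.mem_Icc.mp (hT.1.1 0 j)).1
  have hleN : ∀ j : Fin n, T 0 j ≤ (k + 1) * n :=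
    fun j => (Finset.mem_Icc.mp (hT.1.1 0 j)).2
  rw [wordOf, count_ofFn_true']
  have : (Finset.univ.filter
      (fun i : Fin ((k + 1) * n + 1) => decide (∃ j : Fin n, T 0 j = (i : ℕ) + 1) = true)).card
      = (Finset.univ : Finset (Fin n)).card := by
    refine (Finset.card_bij (fun j _ => (⟨T 0 j - 1, by have := hleN j; omega⟩ :
        Fin ((k + 1) * n + 1))) ?_ ?_ ?_).symm
    · intro j _
      rw [Finset.mem_filter]
      refine ⟨Finset.mem_univ _, ?_⟩
      rw [decide_eq_true_eq]
      exact ⟨j, by have := hone j; simp; omega⟩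
    · intro j1 _ j2 _ hj
      have hv := congrArg Fin.val hj
      simp only at hv
      have h1 := hone j1
      have h2 := hone j2
      exact hrow0.injective (by omega)
    · intro x hx
      rw [Finset.mem_filter, decide_eq_true_eq] at hx
      obtain ⟨_, j, hj⟩ := hx
      exact ⟨j, Finset.mem_univ _, Fin.ext (by simp; omega)⟩
  rw [this]
  simp

lemma btop_zero (hone : ∀ j : Fin n, 1 ≤ T 0 j) : btop T 0 = 0 := by
  rw [btop, Finset.card_eq_zero, Finset.filter_eq_empty_iff]
  intro j _
  have := hone j
  omega

lemma btop_succ (hrow0 : StrictMono (T 0)) (t : ℕ) :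
    btop T (t + 1) = btop T t + (if ∃ j : Fin n, T 0 j = t + 1 then 1 else 0) := by
  classical
  by_cases hex : ∃ j : Fin n, T 0 j = t + 1
  · obtain ⟨j0, hj0⟩ := hex
    rw [if_pos ⟨j0, hj0⟩]
    unfold btop
    have hset : Finset.univ.filter (fun j : Fin n => T 0 j ≤ t + 1)
        = insert j0 (Finset.univ.filter (fun j : Fin n => T 0 j ≤ t)) := by
      ext j
      simp only [Finset.mem_filter, Finset.mem_insert, Finset.mem_univ, true_and]
      constructor
      · intro h
        rcases Nat.lt_or_ge (T 0 j) (t + 1) with h' | h'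
        · right; omega
        · left
          exact hrow0.injective (by omega : T 0 j = T 0 j0)
      · rintro (rfl | h)
        · omega
        · omega
    rw [hset, Finset.card_insert_of_notMem (by
      rw [Finset.mem_filter]
      rintro ⟨_, hh⟩
      omega)]
  · rw [if_neg hex]
    simp only [Nat.add_zero]
    unfold btop
    congr 1
    apply Finset.filter_congr
    intro j _
    constructor
    · intro h
      rcases Nat.lt_or_ge (T 0 j) (t + 1) with h' | h'
      · omega
      · exact absurd ⟨j, by omega⟩ hex
    · intro h
      omega

lemma upCount_wordOf (hT : IsFussTableau k n T) :
    ∀ i, i ≤ (k + 1) * n + 1 → upCount (wordOf k n T) i = btop T i := by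
  classical
  have hrow0 := hT.1.2.2.1 0
  have hone : ∀ j : Fin n, 1 ≤ T 0 j :=
    fun j => (Finset.mem_Icc.mp (hT.1.1 0 j)).1
  intro i
  induction i with
  | zero =>
      intro _
      rw [upCount, List.take_zero, btop_zero hone]
      rfl
  | succ i ih =>
      intro hi
      have hiw : i < (wordOf k n T).length := by rw [wordOf_length]; omega
      have hwi : (wordOf k n T)[i] = decide (∃ j : Fin n, T 0 j = i + 1) := by
        have := wordOf_getD (T := T) (i := i) (by omega)
        rwa [List.getD_eq_getElem _ _ hiw] at this
      rw [upCount, List.take_succ, List.getElem?_eq_getElem hiw, hwi]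
      rw [List.count_append]
      have hup := ih (by omega)
      rw [upCount] at hup
      rw [hup, btop_succ hrow0]
      by_cases hex : ∃ j : Fin n, T 0 j = i + 1
      · rw [if_pos hex]
        simp [hex]
      · rw [if_neg hex]
        simp [hex]

lemma wordOf_isDyck (hn : 0 < n) (hm : m = k * n + 1) (hT : IsFussTableau k n T) :
    IsDyck m n (wordOf k n T) := by
  classical
  have hrow0 := hT.1.2.2.1 0
  have hcol := hT.1.2.2.2
  have hmemI := hT.1.1
  have hinj := hT.1.2.1
  have hone : ∀ (i : Fin (k + 1)) (j : Fin n), 1 ≤ T i j :=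
    fun i j => (Finset.mem_Icc.mp (hmemI i j)).1
  have hleN : ∀ (i : Fin (k + 1)) (j : Fin n), T i j ≤ (k + 1) * n :=
    fun i j => (Finset.mem_Icc.mp (hmemI i j)).2
  have hvals : ∀ x, 1 ≤ x → x ≤ (k + 1) * n → ∃ p : Fin (k + 1) × Fin n, T p.1 p.2 = x := by
    intro x hx1 hx2
    have himg : Finset.image (fun p : Fin (k + 1) × Fin n => T p.1 p.2) Finset.univ
        = Finset.Icc 1 ((k + 1) * n) := by
      refine Finset.eq_of_subset_of_card_le ?_ ?_
      · intro y hy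
        rw [Finset.mem_image] at hy
        obtain ⟨p, _, hp⟩ := hy
        rw [← hp]
        exact hmemI p.1 p.2
      · rw [Finset.card_image_of_injective _ hinj, Nat.card_Icc]
        simp
    have hx : x ∈ Finset.Icc 1 ((k + 1) * n) := Finset.mem_Icc.mpr ⟨hx1, hx2⟩
    rw [← himg, Finset.mem_image] at hx
    obtain ⟨p, _, hp⟩ := hx
    exact ⟨p, hp⟩
  have hlen : (wordOf k n T).length = m + n := by
    rw [wordOf_length, hm]; ring
  have hcnt : (wordOf k n T).count true = n := count_wordOf hT
  refine ⟨hlen, hcnt, ?_⟩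
  intro i
  rcases Nat.lt_or_ge i ((k + 1) * n + 1) with hi | hi
  · -- i ≤ (k+1)*n
    have hup := upCount_wordOf hT i (by omega)
    have htl : ((wordOf k n T).take i).length = i := by
      rw [List.length_take, wordOf_length]; omega
    have hcb := count_bool_length ((wordOf k n T).take i)
    rw [htl] at hcb
    have hrc : rightCount (wordOf k n T) i = i - btop T i := by
      rw [rightCount]
      rw [upCount] at hup
      omega
    set b := btop T i with hbdef
    -- key counting bound : i - b ≤ k * b
    have hkey : i - b ≤ k * b := by
      have hiN : i ≤ (k + 1) * n := by omega
      set A := (Finset.Icc 1 i).filter (fun x => ¬ ∃ j : Fin n, T 0 j = x) with hA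
      set Atop := (Finset.Icc 1 i).filter (fun x => ∃ j : Fin n, T 0 j = x) with hAtop
      have hsplit : Atop.card + A.card = i := by
        rw [hA, hAtop]
        rw [Finset.card_filter_add_card_filter_not, Nat.card_Icc]
        omega
      have hbij : ∀ x ∈ Atop, ∃ j : Fin n, T 0 j = x := by
        intro x hx
        rw [hAtop, Finset.mem_filter] at hx
        exact hx.2
      have hAtopcard : Atop.card = b := by
        rw [hbdef]
        unfold btop
        refine Finset.card_bij (fun x hx => Classical.choose (hbij x hx)) ?_ ?_ ?_
        · intro x hx
          have hspec := Classical.choose_spec (hbij x hx)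
          have hx' := hx
          rw [hAtop, Finset.mem_filter, Finset.mem_Icc] at hx'
          simp only [Finset.mem_filter, Finset.mem_univ, true_and]
          omega
        · intro x1 h1 x2 h2 he
          have s1 := Classical.choose_spec (hbij x1 h1)
          have s2 := Classical.choose_spec (hbij x2 h2)
          rw [← s1, ← s2, he]
        · intro j hj
          rw [Finset.mem_filter] at hj
          have hxmem : T 0 j ∈ Atop := by
            rw [hAtop, Finset.mem_filter, Finset.mem_Icc]
            exact ⟨⟨hone 0 j, hj.2⟩, ⟨j, rfl⟩⟩
          refine ⟨T 0 j, hxmem, ?_⟩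
          have hspec := Classical.choose_spec (hbij _ hxmem)
          exact hrow0.injective hspec
      have hf : ∀ x ∈ A, ∃ p : Fin (k + 1) × Fin n, T p.1 p.2 = x := by
        intro x hx
        rw [hA, Finset.mem_filter, Finset.mem_Icc] at hx
        exact hvals x hx.1.1 (by omega)
      have hAcard : A.card ≤ k * b := by
        set tgt := ((Finset.univ.filter (fun p : Fin (k + 1) => p ≠ 0)) ×ˢ
          (Finset.univ.filter (fun j : Fin n => T 0 j ≤ i))) with htgt
        have htgtcard : tgt.card = k * b := by
          rw [htgt, Finset.card_product]
          congr 1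
          · rw [Finset.filter_ne', Finset.card_erase_of_mem (Finset.mem_univ _)]
            simp
        refine le_trans (Finset.card_le_card_of_injOn
          (fun x => if hx : x ∈ A then Classical.choose (hf x hx) else (0, ⟨0, hn⟩))
          ?_ ?_) (le_of_eq htgtcard)
        · intro x hx
          have hred : (fun x => if hx : x ∈ A then Classical.choose (hf x hx)
              else ((0 : Fin (k + 1)), (⟨0, hn⟩ : Fin n))) x
              = Classical.choose (hf x hx) := dif_pos hx
          rw [hred]
          have hspec := Classical.choose_spec (hf x hx)
          have hxA := hx
          rw [Finset.mem_coe, hA, Finset.mem_filter, Finset.mem_Icc] at hxA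
          have hp0 : (Classical.choose (hf x hx)).1 ≠ 0 := by
            intro h0
            refine hxA.2 ⟨(Classical.choose (hf x hx)).2, ?_⟩
            rw [h0] at hspec
            exact hspec
          have hpos : (0 : Fin (k + 1)) < (Classical.choose (hf x hx)).1 :=
            Fin.pos_iff_ne_zero.mpr hp0
          have hlt : T 0 (Classical.choose (hf x hx)).2 < x := by
            have h5 := hcol (Classical.choose (hf x hx)).2 hpos
            simp only at h5
            omega
          rw [Finset.mem_coe, htgt, Finset.mem_product]
          constructor
          · rw [Finset.mem_filter]
            exact ⟨Finset.mem_univ _, hp0⟩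
          · rw [Finset.mem_filter]
            refine ⟨Finset.mem_univ _, by omega⟩
        · intro x1 h1 x2 h2 he
          have h1' := Finset.mem_coe.mp h1
          have h2' := Finset.mem_coe.mp h2
          have e1 : (fun x => if hx : x ∈ A then Classical.choose (hf x hx)
              else ((0 : Fin (k + 1)), (⟨0, hn⟩ : Fin n))) x1
              = Classical.choose (hf x1 h1') := dif_pos h1'
          have e2 : (fun x => if hx : x ∈ A then Classical.choose (hf x hx)
              else ((0 : Fin (k + 1)), (⟨0, hn⟩ : Fin n))) x2
              = Classical.choose (hf x2 h2') := dif_pos h2'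
          rw [e1, e2] at he
          have s1 := Classical.choose_spec (hf x1 h1')
          have s2 := Classical.choose_spec (hf x2 h2')
          rw [← s1, ← s2, he]
      omega
    have hml : n * (i - b) ≤ m * b := by
      calc n * (i - b) ≤ n * (k * b) := Nat.mul_le_mul_left n hkey
        _ = (k * n) * b := by ring
        _ ≤ (k * n + 1) * b := Nat.mul_le_mul_right b (by omega)
        _ = m * b := by rw [hm]
    rw [hrc, hup]
    exact hml
  · -- i beyond the word
    have htk : (wordOf k n T).take i = wordOf k n T := by
      apply List.take_of_length_le
      rw [wordOf_length]
      omega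
    have hup : upCount (wordOf k n T) i = n := by rw [upCount, htk]; exact hcnt
    have hrc : rightCount (wordOf k n T) i = m := by
      rw [rightCount, htk]
      have := count_bool_length (wordOf k n T)
      rw [hlen, hcnt] at this
      omega
    rw [hup, hrc]
    calc n * m = m * n := by ring
      _ ≤ m * n := le_rfl

lemma letter_iff (hn : 0 < n) (hm : m = k * n + 1) (hD : IsDyck m n w)
    {i : ℕ} (hi : i < (k + 1) * n) :
    w.getD i false = true ↔ ∃ j : Fin n, fillTableau k n w 0 j = i + 1 := by
  obtain ⟨hI, hlen, hfull⟩ := dyck_final hn hm hD (k := k)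
  have hh := hI.heads (i + 1)
  simp only [Nat.add_sub_cancel] at hh
  constructor
  · intro h
    obtain ⟨j, hj, he⟩ := hh.mpr ⟨by omega, by omega, h⟩
    refine ⟨⟨j, by rwa [hlen] at hj⟩, ?_⟩
    rw [fillTableau_eq]
    exact he
  · rintro ⟨j, hj⟩
    rw [fillTableau_eq] at hj
    exact (hh.mp ⟨(j : ℕ), by rw [hlen]; exact j.2, hj⟩).2.2

end Final

end S9

/-- For `m = kn+1`, the map `D ↦ T(D)` given by the filling
algorithm is a bijection from `𝒟_{m,n}` onto `𝒯ₙᵏ`. -/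
theorem statement9 (k n : ℕ) (hk : 0 < k) (hn : 0 < n) (m : ℕ) (hm : m = k * n + 1) :
    Set.BijOn (fillTableau k n) {w : List Bool | IsDyck m n w}
      {T : Fin (k + 1) → Fin n → ℕ | IsFussTableau k n T} := by
  refine ⟨?_, ?_, ?_⟩
  · intro w hw
    exact S9.mapsTo_fuss hn hm hw
  · intro w hw w' hw' heq
    have h1 : w.length = m + n := hw.1
    have h2 : w'.length = m + n := hw'.1
    apply List.ext_getElem (by rw [h1, h2])
    intro i hi1 hi2
    have hkn : m + n = (k + 1) * n + 1 := by rw [hm]; ring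
    rcases Nat.lt_or_ge i ((k + 1) * n) with hlt | hge
    · have e1 := S9.letter_iff hn hm hw hlt
      have e2 := S9.letter_iff hn hm hw' hlt
      rw [heq] at e1
      have hdq : w.getD i false = w'.getD i false := by
        cases hb1 : w.getD i false <;> cases hb2 : w'.getD i false
        · rfl
        · exact absurd (e1.mpr (e2.mp hb2)) (by rw [hb1]; simp)
        · exact absurd (e2.mpr (e1.mp hb1)) (by rw [hb2]; simp)
        · rfl
      rwa [List.getD_eq_getElem _ _ hi1, List.getD_eq_getElem _ _ hi2] at hdq
    · have hie : i = (k + 1) * n := by rw [h1, hkn] at hi1; omega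
      have l1 := S9.dyck_last hn hm hw
      have l2 := S9.dyck_last hn hm hw'
      rw [← hie] at l1 l2
      rw [List.getD_eq_getElem _ _ hi1] at l1
      rw [List.getD_eq_getElem _ _ hi2] at l2
      rw [l1, l2]
  · intro T hT
    exact ⟨S9.wordOf k n T, S9.wordOf_isDyck hn hm hT, S9.fill_eq_of_fuss hT⟩
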